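/- Let H be a torus and y an automorphism of H of finite order n such that the fixed subgroup H^y is finite. For each d | n let m_y(d) be the multiplicity of any primitive d-th root of unity as an eigenvalue of the induced action of y on the Lie algebra of H. Then |H^y| = ∏_{p prime, k ≥ 1, p^k | n} p^{m_y(p^k)}. -/

import Mathlib

open Polynomial


lemma aux_index {M : Type*} [AddCommGroup M] {ι : Type*} [Fintype ι] [DecidableEq ι]
    (bM : Module.Basis ι ℤ M) (g : M →ₗ[ℤ] M) (hg : Function.Injective g)
    (hne : (LinearMap.range g).toAddSubgroup.index ≠ 0) :
    (LinearMap.range g).toAddSubgroup.index = (LinearMap.det g).natAbs := by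
  obtain ⟨o, snf⟩ := (LinearMap.range g).smithNormalForm bM
  have ho : o = Fintype.card ι := snf.toAddSubgroup_index_ne_zero_iff.mp hne
  have hbij : Function.Bijective snf.f :=
    (Fintype.bijective_iff_injective_and_card snf.f).mpr ⟨snf.f.injective, by simp [ho]⟩
  let e : Fin o ≃ ι := Equiv.ofBijective snf.f hbij
  let bN' : Module.Basis ι ℤ (LinearMap.range g) := snf.bN.reindex e
  let eL : M ≃ₗ[ℤ] LinearMap.range g := LinearEquiv.ofInjective g hg
  have hdet1 : LinearMap.det g =
      LinearMap.det ((LinearMap.range g).subtype ∘ₗ (eL : M →ₗ[ℤ] LinearMap.range g)) := by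
    have : (LinearMap.range g).subtype ∘ₗ (eL : M →ₗ[ℤ] LinearMap.range g) = g := by
      ext x; simp [eL]
    rw [this]
  have hassoc : Associated
      (LinearMap.det ((LinearMap.range g).subtype ∘ₗ (eL : M →ₗ[ℤ] LinearMap.range g)))
      (LinearMap.det ((LinearMap.range g).subtype ∘ₗ
        (snf.bM.equiv bN' (Equiv.refl ι) : M →ₗ[ℤ] LinearMap.range g))) :=
    LinearMap.associated_det_comp_equiv _ _ _
  have key : LinearMap.toMatrix snf.bM snf.bM ((LinearMap.range g).subtype ∘ₗ
      (snf.bM.equiv bN' (Equiv.refl ι) : M →ₗ[ℤ] LinearMap.range g)) =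
      Matrix.diagonal (fun j => snf.a (e.symm j)) := by
    ext i j
    have happ : ((LinearMap.range g).subtype ∘ₗ
        (snf.bM.equiv bN' (Equiv.refl ι) : M →ₗ[ℤ] LinearMap.range g)) (snf.bM j)
        = snf.a (e.symm j) • snf.bM j := by
      simp only [LinearMap.comp_apply, LinearEquiv.coe_coe, Module.Basis.equiv_apply, Equiv.refl_apply,
        Submodule.coe_subtype]
      show ((bN' j : LinearMap.range g) : M) = _
      rw [show bN' j = snf.bN (e.symm j) from snf.bN.reindex_apply e j, snf.snf]
      congr 2
      show e (e.symm j) = j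
      exact e.apply_symm_apply j
    rw [LinearMap.toMatrix_apply, happ, map_smul, Module.Basis.repr_self]
    by_cases h : i = j
    · subst h; simp
    · simp [Matrix.diagonal_apply_ne _ h, Finsupp.single_eq_of_ne (Ne.symm h), h]
  have hdet2 : LinearMap.det ((LinearMap.range g).subtype ∘ₗ
      (snf.bM.equiv bN' (Equiv.refl ι) : M →ₗ[ℤ] LinearMap.range g)) = ∏ i, snf.a i := by
    rw [← LinearMap.det_toMatrix snf.bM, key, Matrix.det_diagonal]
    exact Fintype.prod_equiv e.symm _ _ (fun _ => rfl)
  have hnatAbs : (LinearMap.det g).natAbs = ∏ i, (snf.a i).natAbs := by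
    rw [hdet1, Int.natAbs_eq_iff_associated.mpr hassoc, hdet2]
    exact map_prod Int.natAbsHom snf.a Finset.univ
  rw [hnatAbs, snf.toAddSubgroup_index_eq_ite]
  simp [ho, Ideal.span_singleton_toAddSubgroup_eq_zmultiples, Int.index_zmultiples]

theorem card_torus_fixed_points
    (r : ℕ) (V : Type*) [AddCommGroup V] [Module ℝ V] [FiniteDimensional ℝ V]
    (b : Module.Basis (Fin r) ℝ V) (L : Submodule ℤ V)
    (hL : L = Submodule.span ℤ (Set.range b))
    (f : V ≃ₗ[ℝ] V)
    (hfL : ∀ v ∈ L, f v ∈ L) (hfL' : ∀ v ∈ L, f.symm v ∈ L)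
    (n : ℕ) (hn : 0 < n) (hord : orderOf f = n)
    (m : ℕ → ℕ)
    (hchar : LinearMap.charpoly (f : V →ₗ[ℝ] V) =
      ∏ d ∈ n.divisors, (cyclotomic d ℝ) ^ m d)
    (hfin : {x : V ⧸ L.toAddSubgroup |
      ∀ v : V, (v : V ⧸ L.toAddSubgroup) = x → ((f v : V) : V ⧸ L.toAddSubgroup) = x}.Finite) :
    Nat.card {x : V ⧸ L.toAddSubgroup |
        ∀ v : V, (v : V ⧸ L.toAddSubgroup) = x → ((f v : V) : V ⧸ L.toAddSubgroup) = x} =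
      ∏ d ∈ n.divisors.filter IsPrimePow, d.minFac ^ m d := by
  classical
  set S : Set (V ⧸ L.toAddSubgroup) := {x : V ⧸ L.toAddSubgroup |
      ∀ v : V, (v : V ⧸ L.toAddSubgroup) = x → ((f v : V) : V ⧸ L.toAddSubgroup) = x} with hSdef
  set gV : V →ₗ[ℝ] V := (f : V →ₗ[ℝ] V) - LinearMap.id with hgVdef
  have hgV_apply : ∀ v, gV v = f v - v := fun v => rfl
  have hgL : ∀ v ∈ L, gV v ∈ L := fun v hv => by
    rw [hgV_apply]; exact L.sub_mem (hfL v hv) hv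
  -- `gV` is injective
  have hginj : Function.Injective gV := by
    rw [← LinearMap.ker_eq_bot, Submodule.eq_bot_iff]
    intro v hv
    rw [LinearMap.mem_ker] at hv
    have hfv : f v = v := sub_eq_zero.mp (by rw [← hgV_apply v]; exact hv)
    by_contra hv0
    -- the one-parameter subgroup `t ↦ t • v` lands in `S`
    let θ : ℝ →+ (V ⧸ L.toAddSubgroup) := AddMonoidHom.mk'
      (fun t => ((t • v : V) : V ⧸ L.toAddSubgroup)) (by
        intro s t
        show (((s + t) • v : V) : V ⧸ L.toAddSubgroup) = _
        rw [add_smul]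
        rfl)
    have hθ : ∀ t : ℝ, gV (t • v) = 0 := by
      intro t; rw [map_smul, hv, smul_zero]
    have hθS : (θ.range : Set (V ⧸ L.toAddSubgroup)) ⊆ S := by
      rintro x ⟨t, rfl⟩
      rw [hSdef]
      intro w hw
      have hwl : w - t • v ∈ L := (QuotientAddGroup.eq_iff_sub_mem).mp hw
      have h1 : gV w ∈ L := by
        have : gV w = gV (t • v) + gV (w - t • v) := by rw [← map_add]; congr 1; abel
        rw [this, hθ t, zero_add]
        exact hgL _ hwl
      have : f w - w ∈ L := by rwa [← hgV_apply]
      calc ((f w : V) : V ⧸ L.toAddSubgroup) = ((w : V) : V ⧸ L.toAddSubgroup) :=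
            (QuotientAddGroup.eq_iff_sub_mem).mpr this
        _ = θ t := hw
    have hfinθ : (θ.range : Set (V ⧸ L.toAddSubgroup)).Finite := hfin.subset hθS
    haveI : Finite θ.range := hfinθ.to_subtype
    set N := Nat.card θ.range with hN
    have hNpos : 0 < N := Nat.card_pos
    have hsmul : ∀ t : ℝ, θ t = 0 := by
      intro t
      have h1 : N • (⟨θ (t / N), ⟨_, rfl⟩⟩ : θ.range) = 0 := card_nsmul_eq_zero'
      have h2 : N • θ (t / N) = 0 := by
        have := congrArg (Subtype.val) h1
        simpa using this
      have h3 : θ (N • (t / N)) = 0 := by rw [map_nsmul]; exact h2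
      have h4 : (N : ℝ) * (t / N) = t := by
        field_simp
      rwa [nsmul_eq_mul, h4] at h3
    have hall : ∀ t : ℝ, t • v ∈ L := by
      intro t
      have := hsmul t
      have : ((t • v : V) : V ⧸ L.toAddSubgroup) = 0 := this
      rwa [QuotientAddGroup.eq_zero_iff] at this
    -- now derive a contradiction: all real multiples of `v ≠ 0` in the lattice
    have hrepr : b.repr v ≠ 0 := fun h => hv0 (by simpa using b.repr.map_eq_zero_iff.mp h)
    obtain ⟨i, hi⟩ : ∃ i, b.repr v i ≠ 0 := by
      by_contra h
      push_neg at h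
      exact hrepr (Finsupp.ext h)
    set c : ℝ := b.repr v i with hc
    have key : ∀ t : ℝ, t * c ∈ Set.range (algebraMap ℤ ℝ) := by
      intro t
      have h1 : t • v ∈ Submodule.span ℤ (Set.range b) := hL ▸ hall t
      have h2 := (b.mem_span_iff_repr_mem ℤ (t • v)).mp h1 i
      rwa [map_smul, Finsupp.smul_apply, smul_eq_mul] at h2
    obtain ⟨k, hk⟩ := key (1 / (2 * c))
    have hck : (k : ℝ) = 1 / 2 := by
      rw [algebraMap_int_eq, eq_intCast] at hk
      rw [hk]
      field_simp
    have : ((2 * k : ℤ) : ℝ) = ((1 : ℤ) : ℝ) := by push_cast; linarith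
    have h2k : (2 * k : ℤ) = 1 := Int.cast_injective this
    omega
  have hgsurj : Function.Surjective gV := (LinearMap.injective_iff_surjective).mp hginj
  -- the induced map on the lattice
  have hgL2 : ∀ x ∈ L, (gV.restrictScalars ℤ) x ∈ L := fun x hx => hgL x hx
  set gL : ↥L →ₗ[ℤ] ↥L := (gV.restrictScalars ℤ).restrict hgL2 with hgLdef
  have hgL_apply : ∀ x : ↥L, (gL x : V) = gV (x : V) := fun x => rfl
  have hgLinj : Function.Injective gL := fun x y h =>
    Subtype.ext (hginj (by rw [← hgL_apply, ← hgL_apply, h]))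
  -- the basis of the lattice
  set cL : Module.Basis (Fin r) ℤ ↥L :=
    (b.restrictScalars ℤ).map (LinearEquiv.ofEq _ _ hL.symm) with hcL
  have hcoe : ∀ j, ((cL j : ↥L) : V) = b j := by
    intro j
    rw [hcL, Module.Basis.map_apply]
    have : ((LinearEquiv.ofEq _ _ hL.symm) ((b.restrictScalars ℤ) j) : V)
        = ((b.restrictScalars ℤ) j : V) := rfl
    rw [this, Module.Basis.restrictScalars_apply]
  -- the cardinality of `S` equals the index of `gL(L)` in `L`
  have hcards : Nat.card S = (LinearMap.range gL).toAddSubgroup.index := by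
    set π : V →+ V ⧸ L.toAddSubgroup := (QuotientAddGroup.mk' L.toAddSubgroup) with hπ
    set P : AddSubgroup V := L.toAddSubgroup.comap gV.toAddMonoidHom with hP
    have hmemP : ∀ v : V, v ∈ P ↔ gV v ∈ L := fun v => AddSubgroup.mem_comap
    -- `S` is the image of `P`
    have hS : S = π '' ↑P := by
      ext x
      constructor
      · intro hx
        obtain ⟨v, rfl⟩ := QuotientAddGroup.mk'_surjective L.toAddSubgroup x
        rw [hSdef] at hx
        have h1 : ((f v : V) : V ⧸ L.toAddSubgroup) = π v := hx v rfl
        have h2 : f v - v ∈ L := by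
          have := (QuotientAddGroup.eq_iff_sub_mem).mp h1
          exact this
        exact ⟨v, (hmemP v).mpr (by rw [hgV_apply]; exact h2), rfl⟩
      · rintro ⟨v, hv, rfl⟩
        rw [hSdef]
        intro w hw
        have hwl : w - v ∈ L := (QuotientAddGroup.eq_iff_sub_mem).mp hw
        have h1 : gV w ∈ L := by
          have h2 : gV w = gV v + gV (w - v) := by rw [← map_add]; congr 1; abel
          rw [h2]
          exact L.add_mem ((hmemP v).mp hv) (hgL _ hwl)
        have h3 : f w - w ∈ L := by rwa [← hgV_apply]
        calc ((f w : V) : V ⧸ L.toAddSubgroup) = ((w : V) : V ⧸ L.toAddSubgroup) :=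
              (QuotientAddGroup.eq_iff_sub_mem).mpr h3
          _ = π v := hw
    -- the quotient map restricted to `P`
    set φ : ↥P →+ V ⧸ L.toAddSubgroup := π.comp P.subtype with hφ
    have hrangeφ : ((φ.range : AddSubgroup (V ⧸ L.toAddSubgroup)) : Set (V ⧸ L.toAddSubgroup))
        = π '' ↑P := by
      ext x
      simp only [AddMonoidHom.coe_range, Set.mem_range, AddMonoidHom.coe_comp,
        Function.comp_apply, AddSubgroup.coe_subtype, Set.mem_image, SetLike.mem_coe, hφ]
      constructor
      · rintro ⟨⟨v, hv⟩, rfl⟩; exact ⟨v, hv, rfl⟩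
      · rintro ⟨v, hv, rfl⟩; exact ⟨⟨v, hv⟩, rfl⟩
    have hkerφ : φ.ker = L.toAddSubgroup.addSubgroupOf P := by
      ext x
      simp only [AddMonoidHom.mem_ker, hφ, AddMonoidHom.coe_comp, Function.comp_apply,
        AddSubgroup.coe_subtype, AddSubgroup.mem_addSubgroupOf]
      rw [QuotientAddGroup.mk'_apply, QuotientAddGroup.eq_zero_iff]
    -- the map to `L ⧸ gL(L)`
    set N : Submodule ℤ ↥L := LinearMap.range gL with hN
    have hgVP : ∀ p : ↥P, gV (p : V) ∈ L := fun p => (hmemP _).mp p.2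
    set Φ : ↥P →+ (↥L ⧸ N.toAddSubgroup) := AddMonoidHom.mk'
      (fun p => QuotientAddGroup.mk (⟨gV (p : V), hgVP p⟩ : ↥L)) (by
        intro a b
        show (QuotientAddGroup.mk (⟨gV ((a + b : ↥P) : V), hgVP (a + b)⟩ : ↥L)
            : ↥L ⧸ N.toAddSubgroup) = QuotientAddGroup.mk ⟨gV ((a : ↥P) : V), hgVP a⟩
            + QuotientAddGroup.mk ⟨gV ((b : ↥P) : V), hgVP b⟩
        have : (⟨gV ((a + b : ↥P) : V), hgVP (a + b)⟩ : ↥L)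
            = ⟨gV (a : V), hgVP a⟩ + ⟨gV (b : V), hgVP b⟩ := by
          ext
          simp [map_add]
        rw [this]
        rfl) with hΦ
    have hΦsurj : Function.Surjective Φ := by
      intro q
      obtain ⟨l, rfl⟩ := QuotientAddGroup.mk_surjective q
      obtain ⟨v, hv⟩ := hgsurj (l : V)
      have hvP : v ∈ P := by rw [hmemP, hv]; exact l.2
      refine ⟨⟨v, hvP⟩, ?_⟩
      show QuotientAddGroup.mk _ = QuotientAddGroup.mk l
      congr 1
      ext
      exact hv
    have hΦker : Φ.ker = L.toAddSubgroup.addSubgroupOf P := by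
      ext x
      simp only [AddMonoidHom.mem_ker, hΦ, AddMonoidHom.mk'_apply,
        AddSubgroup.mem_addSubgroupOf]
      rw [QuotientAddGroup.eq_zero_iff]
      constructor
      · rintro hmem
        obtain ⟨w, hw⟩ := hmem
        have : gV (w : V) = gV (x : V) := by
          rw [← hgL_apply]
          exact congrArg Subtype.val hw
        have : (w : V) = (x : V) := hginj this
        rw [← this]
        exact w.2
      · intro hx
        exact ⟨⟨(x : V), hx⟩, by ext; rw [hgL_apply]⟩
    -- assemble
    have e1 := QuotientAddGroup.quotientKerEquivRange φ
    have e2 := QuotientAddGroup.quotientKerEquivOfSurjective Φ hΦsurj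
    calc Nat.card S = Nat.card ↥(π '' ↑P) := by rw [hS]
      _ = Nat.card ↥(φ.range : AddSubgroup (V ⧸ L.toAddSubgroup)) := by rw [← hrangeφ]; rfl
      _ = Nat.card (↥P ⧸ φ.ker) := (Nat.card_congr e1.toEquiv).symm
      _ = Nat.card (↥P ⧸ Φ.ker) := by rw [hkerφ, ← hΦker]
      _ = Nat.card (↥L ⧸ N.toAddSubgroup) := Nat.card_congr e2.toEquiv
      _ = N.toAddSubgroup.index := rfl
  -- `S` is finite and nonempty
  have h0 : (0 : V ⧸ L.toAddSubgroup) ∈ S := by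
    rw [hSdef]
    intro v hv
    rw [QuotientAddGroup.eq_zero_iff] at hv ⊢
    exact hfL v hv
  haveI : Finite ↥S := hfin.to_subtype
  haveI : Nonempty ↥S := ⟨⟨0, h0⟩⟩
  have hSne : Nat.card S ≠ 0 := Nat.card_pos.ne'
  have hne : (LinearMap.range gL).toAddSubgroup.index ≠ 0 := hcards ▸ hSne
  rw [hcards, aux_index cL gL hgLinj hne]
  -- the matrix of gV over ℝ is the integer matrix of gL
  set A : Matrix (Fin r) (Fin r) ℤ := LinearMap.toMatrix cL cL gL with hA
  have hmat : gV = Matrix.toLin b b (A.map (Int.cast : ℤ → ℝ)) := by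
    apply b.ext
    intro j
    rw [Matrix.toLin_self]
    have h1 : gV (b j) = ((gL (cL j) : ↥L) : V) := by rw [hgL_apply, hcoe]
    rw [h1]
    conv_lhs => rw [← cL.sum_repr (gL (cL j))]
    rw [Submodule.coe_sum]
    refine Finset.sum_congr rfl fun i _ => ?_
    rw [Submodule.coe_smul]
    rw [Matrix.map_apply, ← Int.cast_smul_eq_zsmul ℝ, hcoe, hA, LinearMap.toMatrix_apply]
  have hdet : LinearMap.det gV = ((LinearMap.det gL : ℤ) : ℝ) := by
    rw [hmat, LinearMap.det_toLin,
      show (A.map (Int.cast : ℤ → ℝ)) = (Int.castRingHom ℝ).mapMatrix A from rfl,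
      ← RingHom.map_det, hA, LinearMap.det_toMatrix]
    rfl
  -- det gV ≠ 0
  have hdetne : LinearMap.det gV ≠ 0 := by
    have := (LinearEquiv.ofBijective gV ⟨hginj, hgsurj⟩).isUnit_det'
    have h2 : LinearMap.det ((LinearEquiv.ofBijective gV ⟨hginj, hgsurj⟩ : V ≃ₗ[ℝ] V) : V →ₗ[ℝ] V)
        = LinearMap.det gV := rfl
    rw [h2] at this
    exact this.ne_zero
  -- evaluating the characteristic polynomial at 1
  set Mf : Matrix (Fin r) (Fin r) ℝ := LinearMap.toMatrix b b (f : V →ₗ[ℝ] V) with hMf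
  have hgVeq : gV = (f : V →ₗ[ℝ] V) - LinearMap.id := by
    ext v; simp [hgV_apply]
  have hMg : LinearMap.toMatrix b b gV = Mf - 1 := by
    rw [hgVeq, map_sub, LinearMap.toMatrix_id, hMf]
  have hev : eval 1 (LinearMap.charpoly (f : V →ₗ[ℝ] V)) = (-1)^r * LinearMap.det gV := by
    rw [← LinearMap.charpoly_toMatrix (f : V →ₗ[ℝ] V) b]
    rw [Matrix.charpoly, _root_.eval_det, Matrix.matPolyEquiv_charmatrix]
    rw [eval_sub, eval_X, eval_C]
    have h1 : (Matrix.scalar (Fin r)) (1:ℝ) - Mf = -(Mf - 1) := by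
      rw [map_one, neg_sub]
    rw [h1, Matrix.det_neg, ← hMg, LinearMap.det_toMatrix]
    simp
  -- m 1 = 0
  have hm1 : m 1 = 0 := by
    by_contra h
    have h1 : eval 1 (LinearMap.charpoly (f : V →ₗ[ℝ] V)) = 0 := by
      rw [hchar, eval_prod]
      refine Finset.prod_eq_zero (Nat.one_mem_divisors.mpr hn.ne') ?_
      rw [eval_pow, cyclotomic_one, eval_sub, eval_X, eval_one, sub_self]
      exact zero_pow h
    rw [hev] at h1
    rcases mul_eq_zero.mp h1 with h2 | h2
    · exact pow_ne_zero r (by norm_num : (-1:ℝ) ≠ 0) h2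
    · exact hdetne h2
  -- evaluating the product of cyclotomic polynomials at 1
  have hprod : eval 1 (∏ d ∈ n.divisors, (cyclotomic d ℝ) ^ m d)
      = ((∏ d ∈ n.divisors.filter IsPrimePow, d.minFac ^ m d : ℕ) : ℝ) := by
    rw [eval_prod,
      ← Finset.prod_filter_mul_prod_filter_not n.divisors IsPrimePow
        (fun d => eval 1 ((cyclotomic d ℝ) ^ m d))]
    have h2 : ∏ d ∈ n.divisors.filter (fun d => ¬ IsPrimePow d),
        eval 1 ((cyclotomic d ℝ) ^ m d) = 1 := by
      refine Finset.prod_eq_one fun d hd => ?_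
      obtain ⟨hdn, hdpp⟩ := Finset.mem_filter.mp hd
      by_cases hd1 : d = 1
      · subst hd1; rw [hm1, pow_zero, eval_one]
      · rw [eval_pow, eval_one_cyclotomic_not_prime_pow, one_pow]
        intro p hp k hpk
        rcases Nat.eq_zero_or_pos k with rfl | hk
        · exact hd1 (by simpa using hpk.symm)
        · exact hdpp ⟨p, k, Nat.prime_iff.mp hp, hk, hpk⟩
    have h3 : ∏ d ∈ n.divisors.filter IsPrimePow, eval 1 ((cyclotomic d ℝ) ^ m d)
        = ∏ d ∈ n.divisors.filter IsPrimePow, ((d.minFac : ℝ)) ^ m d := by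
      refine Finset.prod_congr rfl fun d hd => ?_
      obtain ⟨-, hdpp⟩ := Finset.mem_filter.mp hd
      obtain ⟨p, k, hp, hk, rfl⟩ := hdpp
      haveI : Fact p.Prime := ⟨Nat.prime_iff.mpr hp⟩
      obtain ⟨k, rfl⟩ : ∃ k', k = k' + 1 := ⟨k - 1, (Nat.succ_pred_eq_of_pos hk).symm⟩
      rw [eval_pow, eval_one_cyclotomic_prime_pow,
        Nat.pow_minFac (Nat.succ_ne_zero k), (Fact.out : p.Prime).minFac_eq]
    rw [h2, h3, mul_one]
    push_cast
    rfl
  -- conclude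
  have hfinal : (((LinearMap.det gL).natAbs : ℕ) : ℝ)
      = ((∏ d ∈ n.divisors.filter IsPrimePow, d.minFac ^ m d : ℕ) : ℝ) := by
    rw [Nat.cast_natAbs, Int.cast_abs, ← hdet]
    have h4 : |LinearMap.det gV| = |eval 1 (LinearMap.charpoly (f : V →ₗ[ℝ] V))| := by
      rw [hev, abs_mul, abs_pow, abs_neg, abs_one, one_pow, one_mul]
    rw [h4, hchar, hprod, abs_of_nonneg (Nat.cast_nonneg _)]
  exact_mod_cast hfinal
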